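/- Let (𝒜, D) be a commutative differential ring, ρ ∈ 𝒜, and Ŷ = Σ_{i=0}^n g_i D^i a differential operator in 𝒟⁻. Then in 𝒟⁻: ( ρ∘D^{−1}∘ρ∘Ŷ + Ŷ*∘ρ∘D^{−1}∘ρ )₋ = ρ∘D^{−1}∘(Ŷ*(ρ)) + (Ŷ*(ρ))∘D^{−1}∘ρ, where Ŷ*(ρ) = Σ_{i=0}^n (−1)^i D^i(g_i ρ) ∈ 𝒜 and elements of 𝒜 act as multiplication operators. (This is the key computation showing that the quadratic Poisson tensor restricts to the submanifold of operators whose negative part has the form ρ D^{−1} ρ.) -/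

import Mathlib

/-!
Pseudo-differential operators of the first type `𝒟⁻` over a commutative
differential ring `(𝒜, D)`.  An operator `A = Σ_{i ∈ ℤ} f_i D^i` (with
`f_i = 0` for all sufficiently large `i`) is encoded by its coefficient
function `f : ℤ → 𝒜`.  Multiplication is determined by
`(f D^i)·(g D^j) = Σ_{r ≥ 0} binom(i,r) f D^r(g) D^{i+j-r}`.
-/

namespace TwoBKP

/-- The generalized binomial coefficient `binom(i,r) = i(i−1)⋯(i−r+1)/r! ∈ ℤ`
for an integer upper index `i` and `r : ℕ`. -/
noncomputable def zchoose (i : ℤ) (r : ℕ) : ℤ := Ring.choose i r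

variable {A : Type*} [CommRing A]

/-- `f : ℤ → 𝒜` represents an element of `𝒟⁻` iff its support is bounded above. -/
def IsPDO (f : ℤ → A) : Prop := ∃ N : ℤ, ∀ i : ℤ, N < i → f i = 0

/-- The product in `𝒟⁻`, coefficientwise: the coefficient of `D^n` in `A·B` is
`Σ_{i+j-r=n, r≥0} binom(i,r) f_i D^r(g_j)`. -/
noncomputable def pmul (D : A → A) (f g : ℤ → A) : ℤ → A := fun n =>
  ∑ᶠ p : ℤ × ℤ,
    if 0 ≤ p.1 + p.2 - n then
      zchoose p.1 (p.1 + p.2 - n).toNat • (f p.1 * D^[(p.1 + p.2 - n).toNat] (g p.2))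
    else 0

/-- The unit `1 = 1·D⁰` of `𝒟⁻`. -/
def pone : ℤ → A := fun n => if n = 0 then (1 : A) else 0

/-- The monomial `D^k` (in particular `pD 1 = D` and `pD (-1) = D⁻¹`). -/
def pD (k : ℤ) : ℤ → A := fun n => if n = k then (1 : A) else 0

/-- The multiplication operator `a·D⁰` attached to `a ∈ 𝒜`. -/
def sc (a : A) : ℤ → A := fun n => if n = 0 then a else 0

/-- The nonnegative (differential-operator) part `A₊ = Σ_{i≥0} f_i D^i`. -/
def posPart (f : ℤ → A) : ℤ → A := fun n => if 0 ≤ n then f n else 0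

/-- The negative part `A₋ = Σ_{i<0} f_i D^i`. -/
def negPart (f : ℤ → A) : ℤ → A := fun n => if n < 0 then f n else 0

/-- The residue `res A = f_{-1}`. -/
def res (f : ℤ → A) : A := f (-1)

/-- The adjoint `A* = Σ_i (−D)^i ∘ f_i` computed in `𝒟⁻`, coefficientwise:
the coefficient of `D^n` in `A*` is `Σ_{i ≥ n} (−1)^i binom(i, i−n) D^{i−n}(f_i)`. -/
noncomputable def adj (D : A → A) (f : ℤ → A) : ℤ → A := fun n =>
  ∑ᶠ i : ℤ,
    if 0 ≤ i - n then
      ((-1 : ℤ) ^ i.natAbs * zchoose i (i - n).toNat) • D^[(i - n).toNat] (f i)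
    else 0

/-- Powers in `𝒟⁻`. -/
noncomputable def ppow (D : A → A) (f : ℤ → A) : ℕ → ℤ → A
  | 0 => pone
  | k + 1 => pmul D f (ppow D f k)

/-- The action of a differential operator `Σ_{i≥0} f_i D^i` on an element of `𝒜`. -/
noncomputable def papply (D : A → A) (f : ℤ → A) (a : A) : A :=
  ∑ᶠ i : ℤ, if 0 ≤ i then f i * D^[i.toNat] a else 0

/-- Conjugation by `D`:  `A ↦ D·A·D⁻¹`. -/
noncomputable def conjD (D : A → A) (f : ℤ → A) : ℤ → A :=
  pmul D (pD 1) (pmul D f (pD (-1)))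

end TwoBKP

/-!
STATEMENT 13.  Let `(𝒜, D)` be a commutative differential ring, `ρ ∈ 𝒜`, and
`Ŷ = Σ_{i=0}^n g_i D^i` a differential operator in `𝒟⁻`.  Then
`(ρ D⁻¹ ρ Ŷ + Ŷ* ρ D⁻¹ ρ)₋ = ρ D⁻¹ (Ŷ*(ρ)) + (Ŷ*(ρ)) D⁻¹ ρ`,
where `Ŷ*(ρ)` denotes the action of the adjoint differential operator on `ρ`.
-/

namespace Aux13
open TwoBKP Finset Function
variable {A : Type*} [CommRing A]

lemma zchoose_natCast (n k : ℕ) : zchoose (n : ℤ) k = (n.choose k : ℤ) :=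
  Ring.choose_natCast n k
lemma zchoose_nat_eq_zero {n k : ℕ} (h : n < k) : zchoose (n : ℤ) k = 0 := by
  rw [zchoose_natCast, Nat.choose_eq_zero_of_lt h, Nat.cast_zero]
lemma zchoose_zero_right (i : ℤ) : zchoose i 0 = 1 := Ring.choose_zero_right i
lemma zchoose_zero_succ (k : ℕ) : zchoose (0 : ℤ) (k + 1) = 0 := Ring.choose_zero_succ ℤ k

lemma zchoose_neg (k r : ℕ) :
    zchoose (-1 - (k : ℤ)) r = (-1) ^ r * ((k + r).choose r : ℤ) := by
  have h := nsmul_right_injective (M := ℤ) (n := Nat.factorial r) (Nat.factorial_ne_zero r)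
  apply h
  show r.factorial • zchoose (-1 - (k : ℤ)) r = r.factorial • ((-1) ^ r * ((k + r).choose r : ℤ))
  rw [zchoose, ← Ring.descPochhammer_eq_factorial_smul_choose,
    Polynomial.descPochhammer_smeval_eq_ascPochhammer]
  have e1 : (-1 - (k : ℤ)) - r + 1 = -((k : ℤ) + r) := by push_cast; ring
  rw [e1]
  have e2 : (-((k : ℤ) + r)) = -(((k + r : ℕ) : ℤ)) := by push_cast; ring
  rw [e2, Polynomial.ascPochhammer_smeval_neg_eq_descPochhammer,
    Polynomial.descPochhammer_smeval_eq_descFactorial]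
  rw [Nat.descFactorial_eq_factorial_mul_choose, nsmul_eq_mul]
  push_cast
  rw [Units.smul_def, Int.coe_negOnePow_natCast, smul_eq_mul]
  ring



/-- delta function -/
def single (j : ℤ) (a : A) : ℤ → A := fun n => if n = j then a else 0

lemma sc_eq_single (a : A) : sc a = single 0 a := rfl
lemma pD_eq_single (k : ℤ) : pD (k : ℤ) = single k (1 : A) := rfl

lemma single_apply_self (j : ℤ) (a : A) : single j a j = a := if_pos rfl
lemma single_apply_of_ne {n j : ℤ} (h : n ≠ j) (a : A) : single j a n = 0 := if_neg h

/-- convert a finsum over ℤ×ℤ into a Finset sum -/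
lemma finsum_pair_eq_sum (F : ℤ × ℤ → A) (s : Finset (ℤ × ℤ))
    (h : ∀ p, F p ≠ 0 → p ∈ s) : ∑ᶠ p, F p = ∑ p ∈ s, F p :=
  finsum_eq_finset_sum_of_support_subset F (fun p hp => Finset.mem_coe.mpr (h p hp))

lemma finsum_int_eq_sum (F : ℤ → A) (s : Finset ℤ)
    (h : ∀ i, F i ≠ 0 → i ∈ s) : ∑ᶠ i, F i = ∑ i ∈ s, F i :=
  finsum_eq_finset_sum_of_support_subset F (fun i hi => Finset.mem_coe.mpr (h i hi))

lemma iterD_add (D : Derivation ℤ A A) (n : ℕ) (a b : A) :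
    (⇑D)^[n] (a + b) = (⇑D)^[n] a + (⇑D)^[n] b := by
  induction n generalizing a b with
  | zero => simp
  | succ n ih => simp [Function.iterate_succ_apply, map_add, ih]

lemma iterD_zero (D : Derivation ℤ A A) (n : ℕ) : (⇑D)^[n] (0 : A) = 0 := by
  induction n with
  | zero => simp
  | succ n ih => simp [Function.iterate_succ_apply, map_zero, ih]

lemma iterD_zsmul (D : Derivation ℤ A A) (n : ℕ) (c : ℤ) (a : A) :
    (⇑D)^[n] (c • a) = c • (⇑D)^[n] a := by
  induction n generalizing a with
  | zero => simp
  | succ n ih => rw [Function.iterate_succ_apply, map_zsmul, ih, ← Function.iterate_succ_apply]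

/-- the coefficientwise formula for a product of two monomials `a D^i · b D^j`. -/
lemma pmul_single_single (D : Derivation ℤ A A) (i j : ℤ) (a b : A) (n : ℤ) :
    pmul ⇑D (single i a) (single j b) n =
      if 0 ≤ i + j - n then
        zchoose i (i + j - n).toNat • (a * (⇑D)^[(i + j - n).toNat] b)
      else 0 := by
  unfold pmul
  rw [finsum_eq_single _ ((i, j) : ℤ × ℤ)]
  · simp [single_apply_self]
  · rintro ⟨p1, p2⟩ hp
    rcases eq_or_ne p1 i with h1 | h1
    · have h2 : p2 ≠ j := by
        intro h2; apply hp; rw [h1, h2]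
      rw [show single j b p2 = 0 from if_neg h2]
      split <;> simp [iterD_zero]
    · rw [show single i a p1 = 0 from if_neg h1]
      split <;> simp

/-- left multiplication by `a D^0` is coefficientwise multiplication by `a`. -/
lemma pmul_sc_left (D : A → A) (a : A) (g : ℤ → A) (n : ℤ) :
    pmul D (sc a) g n = a * g n := by
  unfold pmul
  rw [finsum_eq_single _ ((0, n) : ℤ × ℤ)]
  · simp [sc, zchoose_zero_right]
  · rintro ⟨p1, p2⟩ hp
    rcases eq_or_ne p1 0 with h1 | h1
    · rcases eq_or_ne p2 n with h2 | h2
      · exact absurd (by rw [h1, h2]) hp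
      · subst h1
        split
        · rename_i hle
          have h3 : ∃ k : ℕ, ((0 : ℤ) + p2 - n).toNat = k + 1 := by
            refine ⟨((0 : ℤ) + p2 - n).toNat - 1, ?_⟩
            simp only [Prod.fst, Prod.snd] at *
            omega
          obtain ⟨k, hk⟩ := h3
          simp only [Prod.fst, Prod.snd] at *
          rw [hk, zchoose_zero_succ, zero_smul]
        · rfl
    · rw [show sc a p1 = 0 from if_neg h1]
      split <;> simp

lemma D_mul (D : Derivation ℤ A A) (x y : A) : D (x * y) = D x * y + x * D y := by
  rw [Derivation.leibniz, smul_eq_mul, smul_eq_mul]; ring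

/-- iterated Leibniz rule -/
lemma iter_leibniz (D : Derivation ℤ A A) (n : ℕ) (a b : A) :
    (⇑D)^[n] (a * b) =
      ∑ k ∈ Finset.range (n + 1), n.choose k • ((⇑D)^[n - k] a * (⇑D)^[k] b) := by
  induction n with
  | zero => simp
  | succ n IH =>
    calc
      (⇑D)^[n + 1] (a * b) =
          D (∑ k ∈ range (n + 1),
              n.choose k • ((⇑D)^[n - k] a * (⇑D)^[k] b)) := by
        rw [Function.iterate_succ_apply', IH]
      _ = (∑ k ∈ range (n + 1),
            n.choose k • ((⇑D)^[n - k + 1] a * (⇑D)^[k] b)) +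
          ∑ k ∈ range (n + 1),
            n.choose k • ((⇑D)^[n - k] a * (⇑D)^[k + 1] b) := by
        rw [map_sum]
        simp_rw [map_nsmul, D_mul, Function.iterate_succ_apply',
          smul_add, sum_add_distrib]
      _ = (∑ k ∈ range (n + 1),
                n.choose (k + 1) • ((⇑D)^[n - k] a * (⇑D)^[k + 1] b)) +
              1 • ((⇑D)^[n + 1] a * (⇑D)^[0] b) +
            ∑ k ∈ range (n + 1), n.choose k • ((⇑D)^[n - k] a * (⇑D)^[k + 1] b) :=
        ?_
      _ = ((∑ k ∈ range (n + 1), n.choose k • ((⇑D)^[n - k] a * (⇑D)^[k + 1] b)) +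
              ∑ k ∈ range (n + 1),
                n.choose (k + 1) • ((⇑D)^[n - k] a * (⇑D)^[k + 1] b)) +
            1 • ((⇑D)^[n + 1] a * (⇑D)^[0] b) := by
        rw [add_comm, add_assoc]
      _ = (∑ i ∈ range (n + 1),
              (n + 1).choose (i + 1) • ((⇑D)^[n + 1 - (i + 1)] a * (⇑D)^[i + 1] b)) +
            1 • ((⇑D)^[n + 1] a * (⇑D)^[0] b) := by
        simp_rw [Nat.choose_succ_succ, Nat.succ_sub_succ, add_smul, sum_add_distrib]
      _ = ∑ k ∈ range (n + 1 + 1),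
            (n + 1).choose k • ((⇑D)^[n + 1 - k] a * (⇑D)^[k] b) := by
        rw [sum_range_succ' _ (n + 1), Nat.choose_zero_right, tsub_zero]
    congr
    refine (sum_range_succ' _ _).trans (congr_arg₂ (· + ·) ?_ ?_)
    · rw [sum_range_succ, Nat.choose_succ_self, zero_smul, add_zero]
      refine sum_congr rfl fun k hk => ?_
      rw [mem_range] at hk
      congr
      omega
    · rw [Nat.choose_zero_right, tsub_zero]

/-- ℕ → ℤ cast embedding -/
def castEmb : ℕ ↪ ℤ := ⟨fun k => (k : ℤ), Nat.cast_injective⟩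

/-- ℕ → ℤ embedding `k ↦ -1 - k` -/
lemma negEmb_inj : Function.Injective (fun k : ℕ => -1 - (k : ℤ)) := fun a b h => by simp only [sub_right_inj, Nat.cast_inj] at h; exact h

/-- ℕ → ℤ embedding `k ↦ -1 - k` -/
def negEmb : ℕ ↪ ℤ := ⟨fun k => -1 - (k : ℤ), negEmb_inj⟩

/-- The key alternating-sum identity:
`Σ_t (-1)^t C(i,t) D^[i-t](ρ · D^[m+t] ρ) = D^[i] ρ · D^[m] ρ`. -/
lemma alt_sum (D : Derivation ℤ A A) (ρ : A) (i m : ℕ) :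
    ∑ t ∈ range (i + 1),
        ((-1 : ℤ) ^ t * (i.choose t : ℤ)) • (⇑D)^[i - t] (ρ * (⇑D)^[m + t] ρ)
      = (⇑D)^[i] ρ * (⇑D)^[m] ρ := by
  have step1 : ∀ t ∈ range (i + 1),
      ((-1 : ℤ) ^ t * (i.choose t : ℤ)) • (⇑D)^[i - t] (ρ * (⇑D)^[m + t] ρ)
        = ∑ u ∈ range (i + 1 - t),
            ((-1 : ℤ) ^ t * (i.choose t : ℤ) * ((i - t).choose u : ℤ)) •
              ((⇑D)^[i - t - u] ρ * (⇑D)^[m + t + u] ρ) := by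
    intro t ht
    rw [mem_range] at ht
    rw [iter_leibniz, Finset.smul_sum]
    have hit : i + 1 - t = i - t + 1 := by omega
    rw [hit]
    refine Finset.sum_congr rfl fun u hu => ?_
    rw [mem_range] at hu
    have e : (⇑D)^[u] ((⇑D)^[m + t] ρ) = (⇑D)^[m + t + u] ρ := by
      rw [← Function.iterate_add_apply]
      congr 1
      omega
    rw [e, ← natCast_zsmul, smul_smul]
  rw [Finset.sum_congr rfl step1, Finset.sum_sigma']
  rw [Finset.sum_nbij'
    (i := fun x : Σ _ : ℕ, ℕ => (⟨x.1 + x.2, x.1⟩ : Σ _ : ℕ, ℕ))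
    (j := fun y : Σ _ : ℕ, ℕ => (⟨y.2, y.1 - y.2⟩ : Σ _ : ℕ, ℕ))
    (t := (range (i + 1)).sigma fun v => range (v + 1))
    (g := fun y : Σ _ : ℕ, ℕ =>
      ((-1 : ℤ) ^ y.2 * (i.choose y.1 : ℤ) * (y.1.choose y.2 : ℤ)) •
        ((⇑D)^[i - y.1] ρ * (⇑D)^[m + y.1] ρ))]
  · rw [Finset.sum_sigma]
    have inner : ∀ v ∈ range (i + 1),
        (∑ t ∈ range (v + 1),
          ((-1 : ℤ) ^ t * (i.choose v : ℤ) * (v.choose t : ℤ)) •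
            ((⇑D)^[i - v] ρ * (⇑D)^[m + v] ρ))
        = (if v = 0 then (⇑D)^[i] ρ * (⇑D)^[m] ρ else 0) := by
      intro v _
      have e1 : ∀ t, ((-1 : ℤ) ^ t * (i.choose v : ℤ) * (v.choose t : ℤ))
          = ((-1 : ℤ) ^ t * (v.choose t : ℤ)) * (i.choose v : ℤ) := fun t => by ring
      simp only [e1]
      rw [← Finset.sum_smul, ← Finset.sum_mul, Int.alternating_sum_range_choose]
      split
      · rename_i hv
        subst hv
        simp
      · rw [zero_mul, zero_smul]
    rw [Finset.sum_congr rfl inner, Finset.sum_ite_eq' (range (i + 1)) 0]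
    simp
  · rintro ⟨t, u⟩ hx
    simp only [Finset.mem_sigma, mem_range] at hx ⊢
    obtain ⟨h1, h2⟩ := hx
    exact ⟨by omega, by omega⟩
  · rintro ⟨v, t⟩ hy
    simp only [Finset.mem_sigma, mem_range] at hy ⊢
    obtain ⟨h1, h2⟩ := hy
    exact ⟨by omega, by omega⟩
  · rintro ⟨t, u⟩ hx
    simp only [Finset.mem_sigma, mem_range] at hx
    simp only [Sigma.mk.inj_iff, heq_eq_eq]
    exact ⟨trivial, by omega⟩
  · rintro ⟨v, t⟩ hy
    simp only [Finset.mem_sigma, mem_range] at hy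
    simp only [Sigma.mk.inj_iff, heq_eq_eq]
    exact ⟨by omega, trivial⟩
  · rintro ⟨t, u⟩ hx
    simp only [Finset.mem_sigma, mem_range] at hx
    have htu : t + u ≤ i := by omega
    have hcm : (i.choose (t + u)) * ((t + u).choose t) = i.choose t * (i - t).choose u := by
      have := Nat.choose_mul (n := i) (Nat.le_add_right t u)
      rwa [Nat.add_sub_cancel_left] at this
    have e2 : i - t - u = i - (t + u) := by omega
    have e3 : m + t + u = m + (t + u) := by omega
    rw [e2, e3]
    congr 1
    rw [mul_assoc, mul_assoc]
    congr 1
    exact_mod_cast hcm.symm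

/-- Evaluation of the inner sum appearing in `(Ŷ* ρ D⁻¹ ρ)₋`. -/
lemma S_eval (D : Derivation ℤ A A) (ρ : A) (i m K : ℕ) (hK : i + m < K) :
    ∑ l ∈ range K,
        (if l ≤ i + m then
          ((-1 : ℤ) ^ l * (i.choose (i + m - l) : ℤ)) • (⇑D)^[i + m - l] (ρ * (⇑D)^[l] ρ)
        else 0)
      = (-1 : ℤ) ^ m • ((⇑D)^[i] ρ * (⇑D)^[m] ρ) := by
  have hsub : (range (i + 1)).map ⟨fun t => m + t, add_right_injective m⟩ ⊆ range K := by
    intro l hl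
    simp only [Finset.mem_map, Function.Embedding.coeFn_mk, mem_range] at hl ⊢
    omega
  rw [← Finset.sum_subset hsub]
  · rw [Finset.sum_map]
    simp only [Function.Embedding.coeFn_mk]
    have e : ∀ t ∈ range (i + 1),
        (if m + t ≤ i + m then
          ((-1 : ℤ) ^ (m + t) * (i.choose (i + m - (m + t)) : ℤ)) •
            (⇑D)^[i + m - (m + t)] (ρ * (⇑D)^[m + t] ρ)
        else 0)
        = (-1 : ℤ) ^ m • (((-1 : ℤ) ^ t * (i.choose t : ℤ)) •
            (⇑D)^[i - t] (ρ * (⇑D)^[m + t] ρ)) := by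
      intro t ht
      rw [mem_range] at ht
      rw [if_pos (by omega)]
      have e1 : i + m - (m + t) = i - t := by omega
      rw [e1, Nat.choose_symm (show t ≤ i by omega), pow_add, smul_smul]
      congr 1
      ring
    rw [Finset.sum_congr rfl e, ← Finset.smul_sum, alt_sum]
  · intro l hl hnl
    simp only [Finset.mem_map, Function.Embedding.coeFn_mk, mem_range] at hnl
    split
    · rename_i hle
      have hlm : l < m := by
        by_contra hc
        exact hnl ⟨l - m, by omega, by omega⟩
      have : i < i + m - l := by omega
      rw [Nat.choose_eq_zero_of_lt this, Nat.cast_zero, mul_zero, zero_smul]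
    · rfl

lemma adj_single (D : Derivation ℤ A A) (j : ℕ) (g : A) (n : ℤ) :
    adj ⇑D (single (j : ℤ) g) n =
      if 0 ≤ (j : ℤ) - n then
        ((-1 : ℤ) ^ j * zchoose j ((j : ℤ) - n).toNat) • (⇑D)^[((j : ℤ) - n).toNat] g
      else 0 := by
  unfold adj
  rw [finsum_eq_single _ ((j : ℤ))]
  · rw [single_apply_self, Int.natAbs_natCast]
  · intro i hi
    rw [single_apply_of_ne hi]
    split <;> simp [iterD_zero]

lemma adj_single_bound (D : Derivation ℤ A A) (j : ℕ) (g : A) (n : ℤ)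
    (h : ¬(0 ≤ n ∧ n ≤ (j : ℤ))) : adj ⇑D (single (j : ℤ) g) n = 0 := by
  rw [adj_single]
  split
  · rename_i hg
    have hr : j < ((j : ℤ) - n).toNat := by omega
    rw [zchoose_nat_eq_zero hr, mul_zero, zero_smul]
  · rfl

lemma papply_adj_single (D : Derivation ℤ A A) (j : ℕ) (g ρ : A) :
    papply ⇑D (adj ⇑D (single (j : ℤ) g)) ρ = (-1 : ℤ) ^ j • (⇑D)^[j] (g * ρ) := by
  unfold papply
  rw [finsum_int_eq_sum _ ((range (j + 1)).map castEmb)]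
  · rw [Finset.sum_map]
    simp only [castEmb, Function.Embedding.coeFn_mk]
    have e : ∀ k ∈ range (j + 1),
        (if (0 : ℤ) ≤ (k : ℕ) then
          adj ⇑D (single (j : ℤ) g) k * (⇑D)^[((k : ℕ) : ℤ).toNat] ρ else 0)
        = (-1 : ℤ) ^ j • ((j.choose (j - k)) • ((⇑D)^[j - k] g * (⇑D)^[k] ρ)) := by
      intro k hk
      rw [mem_range] at hk
      rw [if_pos (by exact_mod_cast Int.natCast_nonneg k)]
      rw [adj_single, if_pos (by omega)]
      have e1 : ((j : ℤ) - (k : ℕ)).toNat = j - k := by omega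
      have e2 : (((k : ℕ) : ℤ)).toNat = k := by omega
      rw [e1, e2, zchoose_natCast, smul_mul_assoc, mul_smul, natCast_zsmul]
    erw [Finset.sum_congr rfl e]
    rw [← Finset.smul_sum]
    congr 1
    rw [iter_leibniz]
    refine Finset.sum_congr rfl fun k hk => ?_
    rw [mem_range] at hk
    rw [Nat.choose_symm (by omega)]
  · intro i hFi
    have h0 : 0 ≤ i := by
      by_contra h
      rw [if_neg h] at hFi
      exact hFi rfl
    rw [if_pos h0] at hFi
    have hadj : adj ⇑D (single (j : ℤ) g) i ≠ 0 := by
      intro h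
      rw [h, zero_mul] at hFi
      exact hFi rfl
    have hij : i ≤ (j : ℤ) := by
      by_contra hc
      exact hadj (adj_single_bound D j g i (by omega))
    simp only [Finset.mem_map, mem_range, castEmb, Function.Embedding.coeFn_mk]
    exact ⟨i.toNat, by omega, by omega⟩

lemma P_eval (D : Derivation ℤ A A) (a : A) (n : ℤ) :
    pmul ⇑D (pD (-1)) (sc a) n =
      if n < 0 then ((-1 : ℤ) ^ (-1 - n).toNat) • (⇑D)^[(-1 - n).toNat] a else 0 := by
  rw [pD_eq_single, sc_eq_single, pmul_single_single]
  have e : (-1 : ℤ) + 0 - n = -1 - n := by ring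
  rw [e]
  by_cases h : n < 0
  · rw [if_pos (by omega), if_pos h]
    rw [show (-1 : ℤ) = -1 - ((0 : ℕ) : ℤ) by simp, zchoose_neg]
    simp
  · rw [if_neg (by omega), if_neg h]

/-- the operator `ρ D⁻¹ ρ`, in closed form -/
noncomputable def Mop (D : A → A) (ρ : A) : ℤ → A := fun n =>
  if n < 0 then ((-1 : ℤ) ^ (-1 - n).toNat) • (ρ * D^[(-1 - n).toNat] ρ) else 0

lemma M_eval (D : Derivation ℤ A A) (ρ : A) :
    pmul ⇑D (sc ρ) (pmul ⇑D (pD (-1)) (sc ρ)) = Mop ⇑D ρ := by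
  funext n
  rw [pmul_sc_left, P_eval, Mop]
  split
  · rw [mul_smul_comm]
  · rw [mul_zero]

lemma Mop_nonneg {D : A → A} {ρ : A} {n : ℤ} (h : 0 ≤ n) : Mop D ρ n = 0 :=
  if_neg (by omega)

lemma Mop_eval (D : A → A) (ρ : A) (k : ℕ) :
    Mop D ρ (-1 - (k : ℤ)) = ((-1 : ℤ) ^ k) • (ρ * D^[k] ρ) := by
  unfold Mop
  rw [if_pos (by omega)]
  have e : (-1 - (-1 - (k : ℤ))).toNat = k := by omega
  rw [e]

lemma Term1_single (D : Derivation ℤ A A) (ρ g : A) (j m : ℕ) :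
    pmul ⇑D (Mop ⇑D ρ) (single (j : ℤ) g) (-1 - (m : ℤ))
      = ((-1 : ℤ) ^ (j + m)) • (ρ * (⇑D)^[j + m] (g * ρ)) := by
  unfold pmul
  rw [finsum_pair_eq_sum _ (((range (j + m + 1)).map negEmb) ×ˢ {(j : ℤ)})]
  · rw [Finset.sum_product, Finset.sum_map]
    simp only [negEmb, Function.Embedding.coeFn_mk, Finset.sum_singleton]
    have e : ∀ k ∈ range (j + m + 1),
        (if 0 ≤ -1 - (k : ℤ) + (j : ℤ) - (-1 - (m : ℤ)) then
          zchoose (-1 - (k : ℤ)) ((-1 - (k : ℤ) + (j : ℤ) - (-1 - (m : ℤ))).toNat) •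
            (Mop ⇑D ρ (-1 - (k : ℤ)) *
              (⇑D)^[(-1 - (k : ℤ) + (j : ℤ) - (-1 - (m : ℤ))).toNat] (single (j : ℤ) g (j : ℤ)))
        else 0)
        = (-1 : ℤ) ^ (j + m) •
            ((j + m).choose k • (ρ * ((⇑D)^[k] ρ * (⇑D)^[j + m - k] g))) := by
      intro k hk
      rw [mem_range] at hk
      rw [if_pos (by omega), single_apply_self]
      have e1 : (-1 - (k : ℤ) + (j : ℤ) - (-1 - (m : ℤ))).toNat = j + m - k := by omega
      rw [e1, zchoose_neg, show k + (j + m - k) = j + m by omega,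
        Nat.choose_symm (show k ≤ j + m by omega), Mop_eval, smul_mul_assoc, smul_smul]
      have e2 : (-1 : ℤ) ^ (j + m - k) * ((j + m).choose k : ℤ) * (-1 : ℤ) ^ k
          = (-1 : ℤ) ^ (j + m) * ((j + m).choose k : ℤ) := by
        rw [mul_right_comm, ← pow_add, show j + m - k + k = j + m by omega]
      rw [e2, mul_smul, natCast_zsmul, mul_assoc]
    erw [Finset.sum_congr rfl e]
    rw [← Finset.smul_sum]
    congr 1
    have e3 : ∀ k ∈ range (j + m + 1),
        (j + m).choose k • (ρ * ((⇑D)^[k] ρ * (⇑D)^[j + m - k] g))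
          = ρ * ((j + m).choose k • ((⇑D)^[j + m - k] g * (⇑D)^[k] ρ)) := by
      intro k _
      rw [mul_smul_comm]
      ring_nf
    rw [Finset.sum_congr rfl e3, ← Finset.mul_sum, iter_leibniz]
  · rintro ⟨p1, p2⟩ hF
    have hguard : 0 ≤ p1 + p2 - (-1 - (m : ℤ)) := by
      by_contra h
      exact hF (if_neg h)
    rw [if_pos hguard] at hF
    have hp2 : p2 = (j : ℤ) := by
      by_contra hc
      rw [single_apply_of_ne hc, iterD_zero, mul_zero, smul_zero] at hF
      exact hF rfl
    have hp1 : p1 < 0 := by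
      by_contra hc
      rw [Mop_nonneg (by omega), zero_mul, smul_zero] at hF
      exact hF rfl
    subst hp2
    simp only [Finset.mem_product, Finset.mem_map, mem_range, negEmb,
      Function.Embedding.coeFn_mk, Finset.mem_singleton]
    exact ⟨⟨(-1 - p1).toNat, by omega, by omega⟩, trivial⟩

lemma Term2_single (D : Derivation ℤ A A) (ρ g : A) (j m : ℕ) :
    pmul ⇑D (adj ⇑D (single (j : ℤ) g)) (Mop ⇑D ρ) (-1 - (m : ℤ))
      = ((-1 : ℤ) ^ (j + m)) • ((⇑D)^[j] (g * ρ) * (⇑D)^[m] ρ) := by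
  unfold pmul
  rw [finsum_pair_eq_sum _ (((range (j + 1)).map castEmb) ×ˢ ((range (j + m + 1)).map negEmb))]
  · rw [Finset.sum_product]
    simp only [Finset.sum_map, castEmb, negEmb, Function.Embedding.coeFn_mk]
    have e : ∀ i ∈ range (j + 1),
        (∑ l ∈ range (j + m + 1),
          if 0 ≤ (i : ℤ) + (-1 - (l : ℤ)) - (-1 - (m : ℤ)) then
            zchoose (i : ℤ) (((i : ℤ) + (-1 - (l : ℤ)) - (-1 - (m : ℤ))).toNat) •
              (adj ⇑D (single (j : ℤ) g) (i : ℤ) *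
                (⇑D)^[((i : ℤ) + (-1 - (l : ℤ)) - (-1 - (m : ℤ))).toNat] (Mop ⇑D ρ (-1 - (l : ℤ))))
          else 0)
        = ((-1 : ℤ) ^ j * (j.choose (j - i) : ℤ)) •
            ((⇑D)^[j - i] g * ((-1 : ℤ) ^ m • ((⇑D)^[i] ρ * (⇑D)^[m] ρ))) := by
      intro i hi
      rw [mem_range] at hi
      have hadj : adj ⇑D (single (j : ℤ) g) (i : ℤ)
          = ((-1 : ℤ) ^ j * (j.choose (j - i) : ℤ)) • (⇑D)^[j - i] g := by
        rw [adj_single, if_pos (by omega)]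
        have e1 : ((j : ℤ) - (i : ℕ)).toNat = j - i := by omega
        rw [e1, zchoose_natCast]
      have e2 : ∀ l ∈ range (j + m + 1),
          (if 0 ≤ (i : ℤ) + (-1 - (l : ℤ)) - (-1 - (m : ℤ)) then
            zchoose (i : ℤ) (((i : ℤ) + (-1 - (l : ℤ)) - (-1 - (m : ℤ))).toNat) •
              (adj ⇑D (single (j : ℤ) g) (i : ℤ) *
                (⇑D)^[((i : ℤ) + (-1 - (l : ℤ)) - (-1 - (m : ℤ))).toNat] (Mop ⇑D ρ (-1 - (l : ℤ))))
          else 0)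
          = ((-1 : ℤ) ^ j * (j.choose (j - i) : ℤ)) •
              ((⇑D)^[j - i] g *
                (if l ≤ i + m then
                  ((-1 : ℤ) ^ l * (i.choose (i + m - l) : ℤ)) •
                    (⇑D)^[i + m - l] (ρ * (⇑D)^[l] ρ)
                else 0)) := by
        intro l hl
        rw [mem_range] at hl
        by_cases hlim : l ≤ i + m
        · rw [if_pos (by omega), if_pos hlim]
          have e3 : ((i : ℤ) + (-1 - (l : ℤ)) - (-1 - (m : ℤ))).toNat = i + m - l := by omega
          rw [e3, zchoose_natCast, hadj, Mop_eval, iterD_zsmul, smul_mul_smul_comm,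
            smul_smul, mul_smul_comm, smul_smul]
          congr 1
          ring
        · rw [if_neg (by omega), if_neg hlim, mul_zero, smul_zero]
      rw [Finset.sum_congr rfl e2, ← Finset.smul_sum, ← Finset.mul_sum,
        S_eval D ρ i m (j + m + 1) (by omega)]
    erw [Finset.sum_congr rfl e]
    have e4 : ∀ i ∈ range (j + 1),
        ((-1 : ℤ) ^ j * (j.choose (j - i) : ℤ)) •
            ((⇑D)^[j - i] g * ((-1 : ℤ) ^ m • ((⇑D)^[i] ρ * (⇑D)^[m] ρ)))
        = (-1 : ℤ) ^ (j + m) •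
            ((j.choose (j - i)) • (((⇑D)^[j - i] g * (⇑D)^[i] ρ) * (⇑D)^[m] ρ)) := by
      intro i _
      rw [mul_smul_comm, smul_smul,
        show ((-1 : ℤ) ^ j * (j.choose (j - i) : ℤ)) * (-1 : ℤ) ^ m
          = (-1 : ℤ) ^ (j + m) * (j.choose (j - i) : ℤ) by rw [pow_add]; ring,
        mul_smul, natCast_zsmul, mul_assoc]
    rw [Finset.sum_congr rfl e4, ← Finset.smul_sum]
    congr 1
    have e5 : ∀ i ∈ range (j + 1),
        (j.choose (j - i)) • (((⇑D)^[j - i] g * (⇑D)^[i] ρ) * (⇑D)^[m] ρ)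
          = ((j.choose (j - i)) • ((⇑D)^[j - i] g * (⇑D)^[i] ρ)) * (⇑D)^[m] ρ := by
      intro i _
      rw [smul_mul_assoc]
    rw [Finset.sum_congr rfl e5, ← Finset.sum_mul]
    congr 1
    rw [iter_leibniz]
    refine Finset.sum_congr rfl fun k hk => ?_
    rw [mem_range] at hk
    rw [Nat.choose_symm (by omega)]
  · rintro ⟨p1, p2⟩ hF
    have hguard : 0 ≤ p1 + p2 - (-1 - (m : ℤ)) := by
      by_contra h
      exact hF (if_neg h)
    rw [if_pos hguard] at hF
    have hp2 : p2 < 0 := by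
      by_contra hc
      rw [Mop_nonneg (by omega), iterD_zero, mul_zero, smul_zero] at hF
      exact hF rfl
    have hp1 : 0 ≤ p1 ∧ p1 ≤ (j : ℤ) := by
      by_contra hc
      rw [adj_single_bound D j g p1 hc, zero_mul, smul_zero] at hF
      exact hF rfl
    simp only [Finset.mem_product, Finset.mem_map, mem_range,
      castEmb, negEmb, Function.Embedding.coeFn_mk]
    exact ⟨⟨p1.toNat, by omega, by omega⟩, ⟨(-1 - p2).toNat, by omega, by omega⟩⟩

/-- bounded support predicate for differential operators -/
def BddY (Y : ℤ → A) (N : ℕ) : Prop := ∀ i : ℤ, Y i ≠ 0 → 0 ≤ i ∧ i ≤ (N : ℤ)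

lemma support_subset_finset {ι : Type*} {F : ι → A} {S : Finset ι}
    (h : ∀ i, F i ≠ 0 → i ∈ S) : (Function.support F).Finite :=
  Set.Finite.subset S.finite_toSet fun i hi => Finset.mem_coe.mpr (h i hi)

/-- the key identity, in pointwise closed form -/
def Key (D : Derivation ℤ A A) (ρ : A) (Y : ℤ → A) : Prop :=
  ∀ n : ℤ, n < 0 →
    pmul ⇑D (Mop ⇑D ρ) Y n + pmul ⇑D (adj ⇑D Y) (Mop ⇑D ρ) n
      = ((-1 : ℤ) ^ ((-1 - n).toNat)) •
          (ρ * (⇑D)^[(-1 - n).toNat] (papply ⇑D (adj ⇑D Y) ρ))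
        + ((-1 : ℤ) ^ ((-1 - n).toNat)) •
          ((papply ⇑D (adj ⇑D Y) ρ) * (⇑D)^[(-1 - n).toNat] ρ)

lemma Key_single (D : Derivation ℤ A A) (ρ : A) (j : ℕ) (g : A) :
    Key D ρ (single (j : ℤ) g) := by
  intro n hn
  have hm : ∃ m : ℕ, n = -1 - (m : ℤ) := ⟨(-1 - n).toNat, by omega⟩
  obtain ⟨m, rfl⟩ := hm
  have e0 : (-1 - (-1 - (m : ℤ))).toNat = m := by omega
  rw [e0, Term1_single, Term2_single, papply_adj_single, iterD_zsmul,
    ← Function.iterate_add_apply, show m + j = j + m from Nat.add_comm m j,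
    mul_smul_comm, smul_mul_assoc, smul_smul, smul_smul,
    show (-1 : ℤ) ^ m * (-1 : ℤ) ^ j = (-1 : ℤ) ^ (j + m) by rw [← pow_add, Nat.add_comm]]

lemma adj_eq_zero_of (D : Derivation ℤ A A) {Y : ℤ → A} {N : ℕ} (hY : BddY Y N)
    {n : ℤ} (hn : n < 0 ∨ (N : ℤ) < n) : adj ⇑D Y n = 0 := by
  unfold adj
  have hz : ∀ i : ℤ,
      (if 0 ≤ i - n then
        ((-1 : ℤ) ^ i.natAbs * zchoose i (i - n).toNat) • (⇑D)^[(i - n).toNat] (Y i)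
      else 0) = 0 := by
    intro i
    by_cases hg : 0 ≤ i - n
    · rw [if_pos hg]
      by_cases hYi : Y i = 0
      · rw [hYi, iterD_zero, smul_zero]
      · obtain ⟨h0, hN⟩ := hY i hYi
        have hn' : n < 0 := by omega
        obtain ⟨k, rfl⟩ : ∃ k : ℕ, i = (k : ℤ) := ⟨i.toNat, by omega⟩
        have hlt : k < ((k : ℤ) - n).toNat := by omega
        rw [zchoose_nat_eq_zero hlt, mul_zero, zero_smul]
    · rw [if_neg hg]
  rw [finsum_congr hz, finsum_zero]

lemma adj_bdd (D : Derivation ℤ A A) {Y : ℤ → A} {N : ℕ} (hY : BddY Y N) :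
    BddY (adj ⇑D Y) N := by
  intro n hn
  by_contra hc
  exact hn (adj_eq_zero_of D hY (by omega))

lemma adj_add (D : Derivation ℤ A A) {Y₁ Y₂ : ℤ → A} {N : ℕ}
    (h₁ : BddY Y₁ N) (h₂ : BddY Y₂ N) :
    adj ⇑D (Y₁ + Y₂) = adj ⇑D Y₁ + adj ⇑D Y₂ := by
  funext n
  unfold adj
  have hsplit : ∀ i : ℤ,
      (if 0 ≤ i - n then
        ((-1 : ℤ) ^ i.natAbs * zchoose i (i - n).toNat) • (⇑D)^[(i - n).toNat] ((Y₁ + Y₂) i)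
      else 0)
      = (if 0 ≤ i - n then
          ((-1 : ℤ) ^ i.natAbs * zchoose i (i - n).toNat) • (⇑D)^[(i - n).toNat] (Y₁ i)
        else 0)
        + (if 0 ≤ i - n then
          ((-1 : ℤ) ^ i.natAbs * zchoose i (i - n).toNat) • (⇑D)^[(i - n).toNat] (Y₂ i)
        else 0) := by
    intro i
    by_cases hg : 0 ≤ i - n
    · rw [if_pos hg, if_pos hg, if_pos hg, Pi.add_apply, iterD_add, smul_add]
    · rw [if_neg hg, if_neg hg, if_neg hg, add_zero]
  have hfin : ∀ (Y : ℤ → A), BddY Y N → (Function.support (fun i : ℤ =>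
      if 0 ≤ i - n then
        ((-1 : ℤ) ^ i.natAbs * zchoose i (i - n).toNat) • (⇑D)^[(i - n).toNat] (Y i)
      else 0)).Finite := by
    intro Y hY
    apply support_subset_finset (S := Finset.Icc (0 : ℤ) (N : ℤ))
    intro i hi
    rw [Finset.mem_Icc]
    by_contra hc
    apply hi
    by_cases hg : 0 ≤ i - n
    · rw [if_pos hg]
      have hYi : Y i = 0 := by
        by_contra hYi
        exact hc (hY i hYi)
      rw [hYi, iterD_zero, smul_zero]
    · rw [if_neg hg]
  rw [finsum_congr hsplit, finsum_add_distrib (hfin Y₁ h₁) (hfin Y₂ h₂)]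
  rfl

lemma papply_add (D : Derivation ℤ A A) {f₁ f₂ : ℤ → A} {N : ℕ}
    (h₁ : BddY f₁ N) (h₂ : BddY f₂ N) (a : A) :
    papply ⇑D (f₁ + f₂) a = papply ⇑D f₁ a + papply ⇑D f₂ a := by
  unfold papply
  have hsplit : ∀ i : ℤ,
      (if 0 ≤ i then (f₁ + f₂) i * (⇑D)^[i.toNat] a else 0)
      = (if 0 ≤ i then f₁ i * (⇑D)^[i.toNat] a else 0)
        + (if 0 ≤ i then f₂ i * (⇑D)^[i.toNat] a else 0) := by
    intro i
    by_cases hg : 0 ≤ i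
    · rw [if_pos hg, if_pos hg, if_pos hg, Pi.add_apply, add_mul]
    · rw [if_neg hg, if_neg hg, if_neg hg, add_zero]
  have hfin : ∀ (f : ℤ → A), BddY f N → (Function.support (fun i : ℤ =>
      if 0 ≤ i then f i * (⇑D)^[i.toNat] a else 0)).Finite := by
    intro f hf
    apply support_subset_finset (S := Finset.Icc (0 : ℤ) (N : ℤ))
    intro i hi
    rw [Finset.mem_Icc]
    by_contra hc
    apply hi
    by_cases hg : 0 ≤ i
    · rw [if_pos hg]
      have hfi : f i = 0 := by
        by_contra hfi
        exact hc (hf i hfi)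
      rw [hfi, zero_mul]
    · rw [if_neg hg]
  rw [finsum_congr hsplit, finsum_add_distrib (hfin f₁ h₁) (hfin f₂ h₂)]

lemma pmul_add_right (D : Derivation ℤ A A) (f g₁ g₂ : ℤ → A) (Uf : ℤ) (N : ℕ)
    (hf : ∀ i, f i ≠ 0 → i ≤ Uf) (h₁ : BddY g₁ N) (h₂ : BddY g₂ N) (n : ℤ) :
    pmul ⇑D f (g₁ + g₂) n = pmul ⇑D f g₁ n + pmul ⇑D f g₂ n := by
  unfold pmul
  have hsplit : ∀ p : ℤ × ℤ,
      (if 0 ≤ p.1 + p.2 - n then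
        zchoose p.1 (p.1 + p.2 - n).toNat • (f p.1 * (⇑D)^[(p.1 + p.2 - n).toNat] ((g₁ + g₂) p.2))
      else 0)
      = (if 0 ≤ p.1 + p.2 - n then
          zchoose p.1 (p.1 + p.2 - n).toNat • (f p.1 * (⇑D)^[(p.1 + p.2 - n).toNat] (g₁ p.2))
        else 0)
        + (if 0 ≤ p.1 + p.2 - n then
          zchoose p.1 (p.1 + p.2 - n).toNat • (f p.1 * (⇑D)^[(p.1 + p.2 - n).toNat] (g₂ p.2))
        else 0) := by
    intro p
    by_cases hg : 0 ≤ p.1 + p.2 - n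
    · rw [if_pos hg, if_pos hg, if_pos hg, Pi.add_apply, iterD_add, mul_add, smul_add]
    · rw [if_neg hg, if_neg hg, if_neg hg, add_zero]
  have hfin : ∀ (g : ℤ → A), BddY g N → (Function.support (fun p : ℤ × ℤ =>
      if 0 ≤ p.1 + p.2 - n then
        zchoose p.1 (p.1 + p.2 - n).toNat • (f p.1 * (⇑D)^[(p.1 + p.2 - n).toNat] (g p.2))
      else 0)).Finite := by
    intro g hg
    apply support_subset_finset
      (S := Finset.Icc (n - (N : ℤ)) Uf ×ˢ Finset.Icc (0 : ℤ) (N : ℤ))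
    rintro ⟨p1, p2⟩ hp
    have hcond : 0 ≤ p1 + p2 - n := by
      by_contra hc
      exact hp (if_neg hc)
    rw [if_pos hcond] at hp
    have hf1 : f p1 ≠ 0 := by
      intro h
      rw [h, zero_mul, smul_zero] at hp
      exact hp rfl
    have hg2 : g p2 ≠ 0 := by
      intro h
      rw [h, iterD_zero, mul_zero, smul_zero] at hp
      exact hp rfl
    have b1 := hf p1 hf1
    have b2 := hg p2 hg2
    simp only [Finset.mem_product, Finset.mem_Icc]
    omega
  rw [finsum_congr hsplit, finsum_add_distrib (hfin g₁ h₁) (hfin g₂ h₂)]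

lemma pmul_add_left (D : Derivation ℤ A A) (f₁ f₂ : ℤ → A) (ρ : A) (N : ℕ)
    (h₁ : BddY f₁ N) (h₂ : BddY f₂ N) (n : ℤ) :
    pmul ⇑D (f₁ + f₂) (Mop ⇑D ρ) n
      = pmul ⇑D f₁ (Mop ⇑D ρ) n + pmul ⇑D f₂ (Mop ⇑D ρ) n := by
  unfold pmul
  have hsplit : ∀ p : ℤ × ℤ,
      (if 0 ≤ p.1 + p.2 - n then
        zchoose p.1 (p.1 + p.2 - n).toNat •
          ((f₁ + f₂) p.1 * (⇑D)^[(p.1 + p.2 - n).toNat] (Mop ⇑D ρ p.2))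
      else 0)
      = (if 0 ≤ p.1 + p.2 - n then
          zchoose p.1 (p.1 + p.2 - n).toNat •
            (f₁ p.1 * (⇑D)^[(p.1 + p.2 - n).toNat] (Mop ⇑D ρ p.2))
        else 0)
        + (if 0 ≤ p.1 + p.2 - n then
          zchoose p.1 (p.1 + p.2 - n).toNat •
            (f₂ p.1 * (⇑D)^[(p.1 + p.2 - n).toNat] (Mop ⇑D ρ p.2))
        else 0) := by
    intro p
    by_cases hg : 0 ≤ p.1 + p.2 - n
    · rw [if_pos hg, if_pos hg, if_pos hg, Pi.add_apply, add_mul, smul_add]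
    · rw [if_neg hg, if_neg hg, if_neg hg, add_zero]
  have hfin : ∀ (f : ℤ → A), BddY f N → (Function.support (fun p : ℤ × ℤ =>
      if 0 ≤ p.1 + p.2 - n then
        zchoose p.1 (p.1 + p.2 - n).toNat •
          (f p.1 * (⇑D)^[(p.1 + p.2 - n).toNat] (Mop ⇑D ρ p.2))
      else 0)).Finite := by
    intro f hf
    apply support_subset_finset
      (S := Finset.Icc (0 : ℤ) (N : ℤ) ×ˢ Finset.Icc (n - (N : ℤ)) (-1 : ℤ))
    rintro ⟨p1, p2⟩ hp
    have hcond : 0 ≤ p1 + p2 - n := by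
      by_contra hc
      exact hp (if_neg hc)
    rw [if_pos hcond] at hp
    have hf1 : f p1 ≠ 0 := by
      intro h
      rw [h, zero_mul, smul_zero] at hp
      exact hp rfl
    have hg2 : Mop ⇑D ρ p2 ≠ 0 := by
      intro h
      rw [h, iterD_zero, mul_zero, smul_zero] at hp
      exact hp rfl
    have b1 := hf p1 hf1
    have b2 : p2 < 0 := by
      by_contra hc
      exact hg2 (Mop_nonneg (by omega))
    simp only [Finset.mem_product, Finset.mem_Icc]
    omega
  rw [finsum_congr hsplit, finsum_add_distrib (hfin f₁ h₁) (hfin f₂ h₂)]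

lemma Mop_bdd (D : A → A) (ρ : A) : ∀ i : ℤ, Mop D ρ i ≠ 0 → i ≤ -1 := by
  intro i hi
  by_contra hc
  exact hi (Mop_nonneg (by omega))

lemma Key_add (D : Derivation ℤ A A) (ρ : A) {Y₁ Y₂ : ℤ → A} {N : ℕ}
    (h₁ : BddY Y₁ N) (h₂ : BddY Y₂ N)
    (k₁ : Key D ρ Y₁) (k₂ : Key D ρ Y₂) : Key D ρ (Y₁ + Y₂) := by
  intro n hn
  rw [pmul_add_right D (Mop ⇑D ρ) Y₁ Y₂ (-1) N (Mop_bdd ⇑D ρ) h₁ h₂ n,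
    adj_add D h₁ h₂,
    pmul_add_left D (adj ⇑D Y₁) (adj ⇑D Y₂) ρ N (adj_bdd D h₁) (adj_bdd D h₂) n,
    papply_add D (adj_bdd D h₁) (adj_bdd D h₂) ρ,
    iterD_add, mul_add, add_mul, smul_add, smul_add]
  have e1 := k₁ n hn
  have e2 := k₂ n hn
  simp only [zsmul_eq_mul] at e1 e2 ⊢
  linear_combination e1 + e2

lemma Key_of_bdd (D : Derivation ℤ A A) (ρ : A) :
    ∀ (N : ℕ) (Y : ℤ → A), (∀ i : ℤ, Y i ≠ 0 → 0 ≤ i ∧ i < (N : ℤ)) → Key D ρ Y := by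
  intro N
  induction N with
  | zero =>
    intro Y hY
    have hzero : Y = single ((0 : ℕ) : ℤ) 0 := by
      funext i
      have hYi : Y i = 0 := by
        by_contra hc
        have := hY i hc
        omega
      rw [hYi]
      simp [single]
    rw [hzero]
    exact Key_single D ρ 0 0
  | succ N ih =>
    intro Y hY
    set Y' : ℤ → A := fun i => if i = (N : ℤ) then 0 else Y i with hY'def
    have hsplit : Y = Y' + single (N : ℤ) (Y (N : ℤ)) := by
      funext i
      by_cases h : i = (N : ℤ) <;> simp [hY'def, single, h]
    have hbY' : ∀ i : ℤ, Y' i ≠ 0 → 0 ≤ i ∧ i < (N : ℤ) := by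
      intro i hi
      rw [hY'def] at hi
      simp only at hi
      by_cases h : i = (N : ℤ)
      · rw [if_pos h] at hi
        exact absurd rfl hi
      · rw [if_neg h] at hi
        have := hY i hi
        omega
    have k1 := ih Y' hbY'
    have k2 := Key_single D ρ N (Y (N : ℤ))
    rw [hsplit]
    refine Key_add D ρ (N := N) ?_ ?_ k1 k2
    · intro i hi
      have := hbY' i hi
      omega
    · intro i hi
      have : i = (N : ℤ) := by
        by_contra hc
        exact hi (single_apply_of_ne hc _)
      omega

end Aux13

open TwoBKP in
theorem quadratic_tensor_restricts_to_rho_submanifold {𝒜 : Type*} [CommRing 𝒜]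
    (D : Derivation ℤ 𝒜 𝒜) (ρ : 𝒜) (Y : ℤ → 𝒜)
    (hY : IsPDO Y) (hYdiff : ∀ i : ℤ, i < 0 → Y i = 0) :
    negPart
        (pmul ⇑D (pmul ⇑D (sc ρ) (pmul ⇑D (pD (-1)) (sc ρ))) Y
          + pmul ⇑D (adj ⇑D Y) (pmul ⇑D (sc ρ) (pmul ⇑D (pD (-1)) (sc ρ))))
      = pmul ⇑D (sc ρ) (pmul ⇑D (pD (-1)) (sc (papply ⇑D (adj ⇑D Y) ρ)))
        + pmul ⇑D (sc (papply ⇑D (adj ⇑D Y) ρ)) (pmul ⇑D (pD (-1)) (sc ρ)) := by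
  classical
  obtain ⟨Nb, hNb⟩ := hY
  have hbdd : ∀ i : ℤ, Y i ≠ 0 → 0 ≤ i ∧ i < ((Nb.toNat + 1 : ℕ) : ℤ) := by
    intro i hi
    constructor
    · by_contra hc
      exact hi (hYdiff i (by omega))
    · by_contra hc
      exact hi (hNb i (by omega))
  have key := Aux13.Key_of_bdd D ρ (Nb.toNat + 1) Y hbdd
  rw [Aux13.M_eval D ρ]
  funext n
  simp only [TwoBKP.negPart, Pi.add_apply, Aux13.pmul_sc_left, Aux13.P_eval]
  by_cases hn : n < 0
  · rw [if_pos hn, if_pos hn, if_pos hn, key n hn, mul_smul_comm, mul_smul_comm]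
  · rw [if_neg hn, if_neg hn, if_neg hn, mul_zero, mul_zero, add_zero]
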